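/- Key OSOW inequality used in the Greedy analysis: let f be monotone with f(∅)=0 on ground set N with submodular order given by the arrival order, let ALG(t) = {a_1,…,a_{t−1}} with a_τ ∈ N_τ, and let o_t ∈ N_t for each t. Then f(∪_t {o_t}) ≤ f(∪_t {a_t}) + Σ_{t∈T} [f({o_t} ∪ ALG(t)) − f(ALG(t))]. -/
import Mathlib


/-- `lt`-submodular order for a set function w.r.t. a strict order relation `lt`. -/
def SubmodOrderRel {α : Type*} [DecidableEq α] (lt : α → α → Prop) (f : Finset α → ℝ) : Prop :=
  ∀ A B C : Finset α, B ⊆ A →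
    (∀ x ∈ A \ B, ∀ y ∈ B, lt y x) →
    (∀ c ∈ C, ∀ x ∈ A, lt x c) →
    f (C ∪ A) - f A ≤ f (C ∪ B) - f B

/-- key OSOW inequality used in the Greedy analysis. For `f` monotone with
`f ∅ = 0`, submodular on the arrival order (elements of later arrivals succeed those of
earlier arrivals, blocks given by `τ`), with `a t, o t ∈ N t` and
`ALG(t) = {a_1,…,a_{t−1}}`, we have
`f(∪_t {o_t}) ≤ f(∪_t {a_t}) + Σ_t [f({o_t} ∪ ALG(t)) − f(ALG(t))]`. -/
theorem stmt_15 {α : Type*} [Fintype α] [DecidableEq α]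
    (n : ℕ) (τ : α → Fin n)
    (N : Fin n → Finset α) (hN : ∀ t, N t = Finset.univ.filter (fun e => τ e = t))
    (f : Finset α → ℝ)
    (hmono : ∀ S₁ S₂ : Finset α, S₁ ⊆ S₂ → f S₁ ≤ f S₂)
    (hzero : f ∅ = 0)
    (hso : SubmodOrderRel (fun x y => τ x < τ y) f)
    (a o : Fin n → α) (ha : ∀ t, a t ∈ N t) (ho : ∀ t, o t ∈ N t) :
    f (Finset.univ.image o) ≤ f (Finset.univ.image a) +
      ∑ t, (f (insert (o t) ((Finset.univ.filter (fun s => s < t)).image a)) -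
            f ((Finset.univ.filter (fun s => s < t)).image a)) := by
  classical
  have hτa : ∀ t, τ (a t) = t := by
    intro t
    have := ha t
    rw [hN] at this
    exact (Finset.mem_filter.mp this).2
  have hτo : ∀ t, τ (o t) = t := by
    intro t
    have := ho t
    rw [hN] at this
    exact (Finset.mem_filter.mp this).2
  set ALG : ℕ → Finset α :=
    fun m => (Finset.univ.filter (fun s : Fin n => (s : ℕ) < m)).image a with hALG
  set OPT : ℕ → Finset α :=
    fun m => (Finset.univ.filter (fun s : Fin n => m ≤ (s : ℕ))).image o with hOPT
  -- membership characterizations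
  have memALG : ∀ m x, x ∈ ALG m ↔ ∃ s : Fin n, (s : ℕ) < m ∧ a s = x := by
    intro m x
    simp [hALG, Finset.mem_image, Finset.mem_filter]
  have memOPT : ∀ m x, x ∈ OPT m ↔ ∃ s : Fin n, m ≤ (s : ℕ) ∧ o s = x := by
    intro m x
    simp [hOPT, Finset.mem_image, Finset.mem_filter]
  -- the key single-step inequality
  have step : ∀ t : Fin n,
      f (ALG (t : ℕ) ∪ OPT (t : ℕ)) ≤ f (ALG ((t : ℕ) + 1) ∪ OPT ((t : ℕ) + 1)) +
        (f (insert (o t) (ALG (t : ℕ))) - f (ALG (t : ℕ))) := by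
    intro t
    have key := hso (insert (o t) (ALG (t : ℕ))) (ALG (t : ℕ)) (OPT ((t : ℕ) + 1))
      (Finset.subset_insert _ _)
      (by
        intro x hx y hy
        rcases Finset.mem_sdiff.mp hx with ⟨hx1, hx2⟩
        rcases Finset.mem_insert.mp hx1 with rfl | hx3
        · rcases (memALG _ _).mp hy with ⟨s, hs, rfl⟩
          rw [Fin.lt_def, hτa, hτo]
          exact hs
        · exact absurd hx3 hx2)
      (by
        intro c hc x hx
        rcases (memOPT _ _).mp hc with ⟨s, hs, rfl⟩
        rcases Finset.mem_insert.mp hx with rfl | hx3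
        · rw [Fin.lt_def, hτo, hτo]; omega
        · rcases (memALG _ _).mp hx3 with ⟨s', hs', rfl⟩
          rw [Fin.lt_def, hτa, hτo]; omega)
    -- rewrite the left union
    have eq1 : ALG (t : ℕ) ∪ OPT (t : ℕ) = OPT ((t : ℕ) + 1) ∪ insert (o t) (ALG (t : ℕ)) := by
      ext x
      simp only [Finset.mem_union, Finset.mem_insert, memALG, memOPT]
      constructor
      · rintro (⟨s, hs, rfl⟩ | ⟨s, hs, rfl⟩)
        · exact Or.inr (Or.inr ⟨s, hs, rfl⟩)
        · rcases eq_or_lt_of_le hs with h | h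
          · have : s = t := Fin.ext h.symm
            subst this
            exact Or.inr (Or.inl rfl)
          · exact Or.inl ⟨s, h, rfl⟩
      · rintro (⟨s, hs, rfl⟩ | rfl | ⟨s, hs, rfl⟩)
        · exact Or.inr ⟨s, by omega, rfl⟩
        · exact Or.inr ⟨t, le_rfl, rfl⟩
        · exact Or.inl ⟨s, hs, rfl⟩
    have hsub : OPT ((t : ℕ) + 1) ∪ ALG (t : ℕ) ⊆ ALG ((t : ℕ) + 1) ∪ OPT ((t : ℕ) + 1) := by
      intro x hx
      rcases Finset.mem_union.mp hx with hx | hx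
      · exact Finset.mem_union_right _ hx
      · rcases (memALG _ _).mp hx with ⟨s, hs, rfl⟩
        exact Finset.mem_union_left _ ((memALG _ _).mpr ⟨s, by omega, rfl⟩)
    have hmon := hmono _ _ hsub
    rw [eq1]
    linarith
  -- telescoping induction
  have main : ∀ m, m ≤ n → f (ALG 0 ∪ OPT 0) ≤ f (ALG m ∪ OPT m) +
      ∑ t ∈ Finset.univ.filter (fun t : Fin n => (t : ℕ) < m),
        (f (insert (o t) (ALG (t : ℕ))) - f (ALG (t : ℕ))) := by
    intro m
    induction m with
    | zero => intro _; simp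
    | succ m ih =>
      intro hm
      have hm' : m < n := hm
      set t0 : Fin n := ⟨m, hm'⟩ with ht0
      have hfilter : Finset.univ.filter (fun t : Fin n => (t : ℕ) < m + 1) =
          insert t0 (Finset.univ.filter (fun t : Fin n => (t : ℕ) < m)) := by
        ext x
        simp only [Finset.mem_insert, Finset.mem_filter, Finset.mem_univ, true_and,
          Fin.ext_iff, ht0]
        omega
      have ht0n : t0 ∉ Finset.univ.filter (fun t : Fin n => (t : ℕ) < m) := by
        simp [ht0]
      rw [hfilter, Finset.sum_insert ht0n]
      have h1 := step t0
      have h2 := ih (Nat.le_of_succ_le hm)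
      simp only [ht0] at h1
      linarith
  have hfin := main n le_rfl
  -- identify endpoints
  have hA0 : ALG 0 = ∅ := by
    simp [hALG]
  have hO0 : OPT 0 = Finset.univ.image o := by
    simp [hOPT]
  have hAn : ALG n = Finset.univ.image a := by
    have : (Finset.univ.filter (fun s : Fin n => (s : ℕ) < n)) = Finset.univ := by
      ext s; simp [s.isLt]
    simp [hALG, this]
  have hOn : OPT n = ∅ := by
    have h : (Finset.univ.filter (fun s : Fin n => n ≤ (s : ℕ))) = ∅ := by
      ext s; simp [Nat.not_le.mpr s.isLt]
    simp [hOPT, h]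
  have hfiln : (Finset.univ.filter (fun t : Fin n => (t : ℕ) < n)) = Finset.univ := by
    ext s; simp [s.isLt]
  rw [hA0, hO0, hAn, hOn, hfiln, Finset.empty_union, Finset.union_empty] at hfin
  exact hfin
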